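/- For every ε > 0 with μ − ε ∈ I and every c ≥ 0, P(∃ s ∈ ℕ, s ≥ 1, such that μ̂_s < μ − ε and kl(μ̂_s, μ − ε) ≥ c/s) ≤ (2V/ε²) · e^{−c}. -/

import Mathlib

open MeasureTheory Real Set ENNReal

/-- For every `ε > 0` with `μ - ε ∈ I` and every `c ≥ 0`,
`P(∃ s ≥ 1, μ̂ₛ < μ - ε ∧ kl (μ̂ₛ, μ - ε) ≥ c / s) ≤ (2V / ε²) · e^{-c}`. -/
theorem prob_deviation_below_le
    (ρ : Measure ℝ) [SigmaFinite ρ]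
    (Θ : Set ℝ) (hΘ : Θ = {θ : ℝ | Integrable (fun x => exp (θ * x)) ρ})
    (b b' b'' : ℝ → ℝ)
    (hb : ∀ θ ∈ Θ, b θ = log (∫ x, exp (θ * x) ∂ρ))
    (hb' : ∀ θ ∈ interior Θ, HasDerivAt b (b' θ) θ)
    (hb'' : ∀ θ ∈ interior Θ, HasDerivAt b' (b'' θ) θ)
    (hbpos : ∀ θ ∈ interior Θ, 0 < b'' θ)
    (Iset : Set ℝ) (hI : Iset = b' '' (interior Θ))
    (kl : ℝ → ℝ → ℝ)
    (hkl : ∀ θ ∈ interior Θ, ∀ θ' ∈ interior Θ,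
      kl (b' θ) (b' θ') = b θ' - b θ - b' θ * (θ' - θ))
    (hklcont : ∀ μ' ∈ Iset, ContinuousOn (fun x => kl x μ') (closure Iset))
    (V : ℝ) (hV : 0 < V) (hbV : ∀ θ ∈ interior Θ, b'' θ ≤ V)
    (θ : ℝ) (hθ : θ ∈ interior Θ)
    (ν : Measure ℝ) (hν : ν = ρ.withDensity (fun x => ENNReal.ofReal (exp (θ * x - b θ))))
    (hsupp : ν (closure Iset)ᶜ = 0)
    (μ : ℝ) (hμ : μ = b' θ)
    (Ω : Type*) [MeasurableSpace Ω] (P : Measure Ω) [IsProbabilityMeasure P]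
    (X : ℕ → Ω → ℝ) (hXmeas : ∀ i, Measurable (X i))
    (hXlaw : ∀ i, Measure.map (X i) P = ν)
    (hXindep : ProbabilityTheory.iIndepFun X P)
    (μhat : ℕ → Ω → ℝ) (hμhat : ∀ s ω, μhat s ω = (∑ i ∈ Finset.range s, X i ω) / s)
    (ε : ℝ) (hε : 0 < ε) (hμε : μ - ε ∈ Iset) (c : ℝ) (hc : 0 ≤ c) :
    P {ω | ∃ s : ℕ, 1 ≤ s ∧ μhat s ω < μ - ε ∧ c / s ≤ kl (μhat s ω) (μ - ε)} ≤
      ENNReal.ofReal (2 * V / ε ^ 2 * Real.exp (-c)) := by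
  classical
  -- convexity of Θ
  have hΘconv : Convex ℝ Θ := by
    rw [hΘ]
    intro θ₁ h1 θ₂ h2 p q hp hq hpq
    simp only [mem_setOf_eq] at h1 h2 ⊢
    have hmeas : AEStronglyMeasurable (fun x => exp ((p • θ₁ + q • θ₂) * x)) ρ := by
      exact (Real.continuous_exp.comp ((continuous_const.mul continuous_id))).aestronglyMeasurable
    refine ((h1.const_mul p).add (h2.const_mul q)).mono' hmeas ?_
    refine ae_of_all _ fun x => ?_
    rw [Real.norm_eq_abs, abs_of_nonneg (exp_pos _).le]
    have h := convexOn_exp.2 (mem_univ (θ₁ * x)) (mem_univ (θ₂ * x)) hp hq hpq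
    simp only [smul_eq_mul] at h ⊢
    calc exp ((p * θ₁ + q * θ₂) * x) = exp (p * (θ₁ * x) + q * (θ₂ * x)) := by ring_nf
    _ ≤ p * exp (θ₁ * x) + q * exp (θ₂ * x) := h
  have hIntConv : Convex ℝ (interior Θ) := hΘconv.interior
  have hb'cont : ContinuousOn b' (interior Θ) := fun x hx =>
    (hb'' x hx).continuousAt.continuousWithinAt
  have hb'mono : StrictMonoOn b' (interior Θ) := by
    apply strictMonoOn_of_deriv_pos hIntConv hb'cont
    intro x hx
    rw [isOpen_interior.interior_eq] at hx
    rw [(hb'' x hx).deriv]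
    exact hbpos x hx
  obtain ⟨θ', hθ'mem, hθ'eq⟩ : ∃ η ∈ interior Θ, b' η = μ - ε := by
    rwa [hI, mem_image] at hμε
  have hμI : μ ∈ Iset := by rw [hI, hμ]; exact mem_image_of_mem _ hθ
  have hθ'lt : θ' < θ := by
    rcases lt_trichotomy θ' θ with h | h | h
    · exact h
    · exfalso; rw [h] at hθ'eq; rw [← hμ] at hθ'eq; linarith
    · exfalso; have := hb'mono hθ hθ'mem h; rw [hθ'eq, ← hμ] at this; linarith
  have hIord : Set.OrdConnected Iset := by
    constructor
    intro x hx y hy z hz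
    rw [hI, mem_image] at hx hy
    obtain ⟨α, hα, rfl⟩ := hx
    obtain ⟨β, hβ, rfl⟩ := hy
    rw [hI]
    rcases le_total α β with hab | hab
    · have hsub : Icc α β ⊆ interior Θ := hIntConv.ordConnected.out hα hβ
      obtain ⟨γ, hγ, hγeq⟩ := intermediate_value_Icc hab (hb'cont.mono hsub) hz
      exact ⟨γ, hsub hγ, hγeq⟩
    · have hsub : Icc β α ⊆ interior Θ := hIntConv.ordConnected.out hβ hα
      obtain ⟨γ, hγ, hγeq⟩ := intermediate_value_Icc' hab (hb'cont.mono hsub) hz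
      exact ⟨γ, hsub hγ, hγeq⟩
  have hIconv : Convex ℝ Iset := hIord.convex
  have hCconv : Convex ℝ (closure Iset) := hIconv.closure
  have hspan : ∀ m ∈ closure Iset, ∀ x : ℝ, m < x → x ≤ μ - ε → x ∈ Iset := by
    intro m hm x hmx hxle
    obtain ⟨i, hiI, hdist⟩ := Metric.mem_closure_iff.mp hm (x - m) (by linarith)
    have hix : i ≤ x := by
      have h1 : |m - i| < x - m := by rwa [Real.dist_eq] at hdist
      have h2 := abs_lt.mp h1
      linarith [h2.1, h2.2]
    exact hIord.out hiI hμε ⟨hix, hxle⟩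
  -- kl identities
  have hK : kl (μ - ε) μ = b θ - b θ' - b' θ' * (θ - θ') := by
    rw [← hθ'eq, hμ, hkl θ' hθ'mem θ hθ]
  have hdiffI : ∀ x ∈ Iset, kl x μ - kl x (μ - ε) = b θ - b θ' - x * (θ - θ') := by
    intro x hx
    rw [hI, mem_image] at hx
    obtain ⟨η, hη, rfl⟩ := hx
    rw [← hθ'eq, hμ, hkl η hη θ hθ, hkl η hη θ' hθ'mem]; ring
  have hdiffC : ∀ x ∈ closure Iset, kl x μ - kl x (μ - ε) = b θ - b θ' - x * (θ - θ') := by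
    intro x hx
    have hne : (nhdsWithin x Iset).NeBot := mem_closure_iff_nhdsWithin_neBot.mp hx
    set g : ℝ → ℝ := fun y => kl y μ - kl y (μ - ε) - (b θ - b θ' - y * (θ - θ')) with hg
    have hcont : ContinuousWithinAt g Iset x := by
      apply ContinuousWithinAt.sub
      · exact ((((hklcont μ hμI) x hx).mono subset_closure).sub
          (((hklcont _ hμε) x hx).mono subset_closure))
      · exact (continuous_const.sub ((continuous_id.mul continuous_const))).continuousWithinAt
    have h1 : Filter.Tendsto g (nhdsWithin x Iset) (nhds (g x)) := hcont
    have h2 : Filter.Tendsto g (nhdsWithin x Iset) (nhds 0) := by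
      apply Filter.Tendsto.congr' _ tendsto_const_nhds
      filter_upwards [self_mem_nhdsWithin] with y hy
      have := hdiffI y hy
      simp only [hg]; linarith
    have := tendsto_nhds_unique h1 h2
    simp only [hg] at this; linarith

  -- antitonicity of kl(·, μ) left of μ
  have hanti : ∀ x ∈ Iset, ∀ y ∈ Iset, x ≤ y → y ≤ μ → kl y μ ≤ kl x μ := by
    set F : ℝ → ℝ := fun η => b θ - b η - b' η * (θ - η) with hF
    set D : Set ℝ := interior Θ ∩ Iic θ with hD
    have hDconv : Convex ℝ D := hIntConv.inter (convex_Iic θ)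
    have hDsub : D ⊆ interior Θ := inter_subset_left
    have hFd : ∀ η ∈ interior Θ, HasDerivAt F (-(b'' η * (θ - η))) η := by
      intro η hη
      have h1 := hb' η hη
      have h2 := hb'' η hη
      have h3 : HasDerivAt F (0 - b' η - (b'' η * (θ - η) + b' η * (0 - 1))) η := by
        exact ((hasDerivAt_const η (b θ)).sub h1).sub
          (h2.mul ((hasDerivAt_const η θ).sub (hasDerivAt_id η)))
      convert h3 using 1; ring
    have hFanti : AntitoneOn F D := by
      apply antitoneOn_of_deriv_nonpos hDconv
      · exact fun x hx => (hFd x (hDsub hx)).continuousAt.continuousWithinAt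
      · intro x hx
        exact (hFd x (hDsub (interior_subset hx))).differentiableAt.differentiableWithinAt
      · intro x hx
        have hx' : x ∈ D := interior_subset hx
        rw [(hFd x (hDsub hx')).deriv]
        have h1 : 0 < b'' x := hbpos x (hDsub hx')
        have h2 : x ≤ θ := hx'.2
        nlinarith
    intro x hx y hy hxy hyμ
    rw [hI, mem_image] at hx hy
    obtain ⟨α, hα, rfl⟩ := hx
    obtain ⟨β, hβ, rfl⟩ := hy
    have hβθ : β ≤ θ := by
      by_contra hcon
      push_neg at hcon
      have := hb'mono hθ hβ hcon
      rw [← hμ] at this; linarith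
    have hαβ : α ≤ β := by
      by_contra hcon
      push_neg at hcon
      have := hb'mono hβ hα hcon
      linarith
    have := hFanti ⟨hα, hαβ.trans hβθ⟩ ⟨hβ, hβθ⟩ hαβ
    rw [hμ, hkl α hα θ hθ, hkl β hβ θ hθ]
    simpa [hF] using this
  -- lower bound on kl (μ-ε) μ
  have hKlb : ε ^ 2 / (2 * V) ≤ kl (μ - ε) μ := by
    set φ : ℝ → ℝ :=
      fun t => b t - b θ' - b' θ' * (t - θ') - (b' t - b' θ') ^ 2 / (2 * V) with hφ
    have hIccSub : Icc θ' θ ⊆ interior Θ := hIntConv.ordConnected.out hθ'mem hθ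
    have hφd : ∀ t ∈ Icc θ' θ,
        HasDerivAt φ ((b' t - b' θ') * (1 - b'' t / V)) t := by
      intro t ht
      have h1 := hb' t (hIccSub ht)
      have h2 := hb'' t (hIccSub ht)
      have h3 : HasDerivAt φ
          (b' t - b' θ' * 1 - (↑(2:ℕ) * (b' t - b' θ') ^ (2-1) * b'' t) / (2 * V)) t := by
        exact ((h1.sub_const (b θ')).sub
          (((hasDerivAt_id t).sub_const θ').const_mul (b' θ'))).sub
          (((h2.sub_const (b' θ')).pow 2).div_const (2 * V))
      convert h3 using 1
      push_cast
      field_simp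
    have hφmono : MonotoneOn φ (Icc θ' θ) := by
      apply monotoneOn_of_deriv_nonneg (convex_Icc _ _)
      · exact fun t ht => (hφd t ht).continuousAt.continuousWithinAt
      · intro t ht
        rw [interior_Icc] at ht
        exact (hφd t (Ioo_subset_Icc_self ht)).differentiableAt.differentiableWithinAt
      · intro t ht
        rw [interior_Icc] at ht
        have ht' := Ioo_subset_Icc_self ht
        rw [(hφd t ht').deriv]
        have h1 : b' θ' ≤ b' t :=
          hb'mono.monotoneOn hθ'mem (hIccSub ht') ht'.1
        have h2 : b'' t ≤ V := hbV t (hIccSub ht')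
        have h3 : 0 ≤ 1 - b'' t / V := by
          rw [sub_nonneg, div_le_one hV]; exact h2
        exact mul_nonneg (by linarith) h3
    have hmono := hφmono (left_mem_Icc.mpr hθ'lt.le) (right_mem_Icc.mpr hθ'lt.le) hθ'lt.le
    have hφθ' : φ θ' = 0 := by simp [hφ]
    have hbb : b' θ - b' θ' = ε := by rw [hθ'eq, ← hμ]; ring
    rw [hφθ'] at hmono
    simp only [hφ] at hmono
    rw [hbb] at hmono
    rw [hK]
    linarith
  -- probability measure facts
  have hν1 : IsProbabilityMeasure ν := by
    constructor
    rw [← hXlaw 0, Measure.map_apply (hXmeas 0) MeasurableSet.univ]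
    simp
  have hρne : ρ ≠ 0 := by
    intro h
    have h0 : ν univ = 0 := by rw [hν, h]; simp
    rw [measure_univ] at h0
    exact one_ne_zero h0
  have hbint : ∀ η ∈ Θ, Integrable (fun x => exp (η * x)) ρ := by
    intro η hη; rwa [hΘ, mem_setOf_eq] at hη
  have hbexp : ∀ η ∈ Θ, ∫ x, exp (η * x) ∂ρ = exp (b η) := by
    intro η hη
    rw [hb η hη, Real.exp_log]
    apply (integral_pos_iff_support_of_nonneg (fun x => (exp_pos _).le) (hbint η hη)).mpr
    have hsup : Function.support (fun x => exp (η * x)) = univ := by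
      ext x; simp [Function.mem_support, (exp_pos (η * x)).ne']
    rw [hsup]
    exact Measure.measure_univ_pos.mpr hρne
  have hdens_meas : Measurable (fun x : ℝ => ENNReal.ofReal (exp (θ * x - b θ))) := by
    apply ENNReal.measurable_ofReal.comp
    exact (((measurable_id.const_mul θ).sub_const (b θ)).exp)
  have hνint : ∀ η ∈ interior Θ, Integrable (fun x => exp ((η - θ) * x)) ν := by
    intro η hη
    rw [hν, integrable_withDensity_iff hdens_meas (ae_of_all _ fun x => ofReal_lt_top)]
    have heq : (fun x => exp ((η - θ) * x) * (ENNReal.ofReal (exp (θ * x - b θ))).toReal)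
        = fun x => exp (η * x) * exp (-(b θ)) := by
      ext x
      rw [ENNReal.toReal_ofReal (exp_pos _).le, ← Real.exp_add, ← Real.exp_add]
      ring_nf
    rw [heq]
    exact (hbint η (interior_subset hη)).mul_const _
  have hνmgf : ∀ η ∈ interior Θ, ∫ x, exp ((η - θ) * x) ∂ν = exp (b η - b θ) := by
    intro η hη
    have hmeas' : Measurable (fun x : ℝ => Real.toNNReal (exp (θ * x - b θ))) :=
      (((measurable_id.const_mul θ).sub_const (b θ)).exp).real_toNNReal
    rw [hν]
    have hrw : ρ.withDensity (fun x : ℝ => ENNReal.ofReal (exp (θ * x - b θ)))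
        = ρ.withDensity (fun x : ℝ => ((Real.toNNReal (exp (θ * x - b θ)) : NNReal) : ENNReal)) :=
      rfl
    rw [hrw, integral_withDensity_eq_integral_smul hmeas']
    have heq : (fun x => Real.toNNReal (exp (θ * x - b θ)) • exp ((η - θ) * x))
        = fun x => exp (η * x) * exp (-(b θ)) := by
      ext x
      rw [NNReal.smul_def, smul_eq_mul, Real.coe_toNNReal _ (exp_pos _).le,
        ← Real.exp_add, ← Real.exp_add]
      ring_nf
    rw [heq, integral_mul_const, hbexp η (interior_subset hη), ← Real.exp_add]
    ring_nf
  have hXint : ∀ η ∈ interior Θ, ∀ i, Integrable (fun ω => exp ((η - θ) * X i ω)) P := by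
    intro η hη i
    have h1 := hνint η hη
    rw [← hXlaw i] at h1
    have hg : AEStronglyMeasurable (fun x : ℝ => exp ((η - θ) * x)) (Measure.map (X i) P) :=
      (Real.continuous_exp.comp (continuous_const.mul continuous_id)).aestronglyMeasurable
    exact (integrable_map_measure hg (hXmeas i).aemeasurable).mp h1
  have hXmgf : ∀ η ∈ interior Θ, ∀ i, ∫ ω, exp ((η - θ) * X i ω) ∂P = exp (b η - b θ) := by
    intro η hη i
    rw [← hνmgf η hη, ← hXlaw i]
    have hg : AEStronglyMeasurable (fun x : ℝ => exp ((η - θ) * x)) (Measure.map (X i) P) :=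
      (Real.continuous_exp.comp (continuous_const.mul continuous_id)).aestronglyMeasurable
    exact (integral_map (hXmeas i).aemeasurable hg).symm
  -- Chernoff bound
  have hchern : ∀ s : ℕ, 1 ≤ s → ∀ x ∈ Iset, x ≤ μ - ε →
      P {ω | μhat s ω ≤ x} ≤ ENNReal.ofReal (exp (-(s : ℝ) * kl x μ)) := by
    intro s hs x hxI hxle
    have hx' := hxI
    rw [hI, mem_image] at hx'
    obtain ⟨η, hη, rfl⟩ := hx'
    have hηθ : η ≤ θ := by
      by_contra hcon
      push_neg at hcon
      have := hb'mono hθ hη hcon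
      rw [← hμ] at this; linarith
    set t : ℝ := η - θ with htdef
    have htneg : t ≤ 0 := by simp [htdef]; linarith
    have hsPos : (0 : ℝ) < s := by exact_mod_cast hs
    have hint : Integrable (fun ω => exp (t * (∑ i ∈ Finset.range s, X i) ω)) P := by
      apply hXindep.integrable_exp_mul_sum hXmeas
      exact fun i _ => hXint η hη i
    have hmarkov := ProbabilityTheory.measure_le_le_exp_mul_mgf ((s : ℝ) * b' η) htneg hint
    have hmgfS : ProbabilityTheory.mgf (∑ i ∈ Finset.range s, X i) P t
        = exp ((s : ℝ) * (b η - b θ)) := by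
      rw [hXindep.mgf_sum hXmeas]
      have hone : ∀ i ∈ Finset.range s, ProbabilityTheory.mgf (X i) P t = exp (b η - b θ) :=
        fun i _ => hXmgf η hη i
      rw [Finset.prod_congr rfl hone, Finset.prod_const, Finset.card_range,
        ← Real.exp_nat_mul]
    have hset : {ω | μhat s ω ≤ b' η}
        = {ω | (∑ i ∈ Finset.range s, X i) ω ≤ (s : ℝ) * b' η} := by
      ext ω
      simp only [mem_setOf_eq, hμhat, Finset.sum_apply]
      rw [div_le_iff₀ hsPos]
      constructor <;> intro h <;> linarith [mul_comm (b' η) (s : ℝ)]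
    rw [hset]
    rw [hmgfS] at hmarkov
    have hle : P {ω | (∑ i ∈ Finset.range s, X i) ω ≤ (s : ℝ) * b' η}
        ≤ ENNReal.ofReal (exp (-t * ((s : ℝ) * b' η)) * exp ((s : ℝ) * (b η - b θ))) := by
      rw [ENNReal.le_ofReal_iff_toReal_le (measure_ne_top P _) (by positivity)]
      exact hmarkov
    apply hle.trans
    apply ENNReal.ofReal_le_ofReal
    rw [← Real.exp_add]
    apply Real.exp_le_exp.mpr
    rw [hμ, hkl η hη θ hθ]
    simp only [htdef]
    ring_nf
    exact le_refl _
  -- null events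
  have hbad : ∀ i : ℕ, P {ω | X i ω ∉ closure Iset} = 0 := by
    intro i
    have hmeasC : MeasurableSet ((closure Iset)ᶜ) :=
      isClosed_closure.measurableSet.compl
    have hpre : {ω | X i ω ∉ closure Iset} = X i ⁻¹' (closure Iset)ᶜ := rfl
    rw [hpre, ← Measure.map_apply (hXmeas i) hmeasC, hXlaw i]
    exact hsupp
  -- empirical mean stays in closure Iset
  have hmeanC : ∀ s : ℕ, 1 ≤ s → ∀ ω : Ω,
      (∀ i ∈ Finset.range s, X i ω ∈ closure Iset) → μhat s ω ∈ closure Iset := by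
    intro s hs ω hω
    rw [hμhat]
    have hsPos : (0 : ℝ) < s := by exact_mod_cast hs
    have hsne : (s : ℝ) ≠ 0 := hsPos.ne'
    have hsum := hCconv.sum_mem (t := Finset.range s) (w := fun _ => (s : ℝ)⁻¹)
      (fun i _ => by positivity)
      (by rw [Finset.sum_const, Finset.card_range, nsmul_eq_mul, mul_inv_cancel₀ hsne]) hω
    have heq : (∑ i ∈ Finset.range s, X i ω) / (s : ℝ)
        = ∑ i ∈ Finset.range s, (s : ℝ)⁻¹ • X i ω := by
      rw [Finset.sum_div]
      exact Finset.sum_congr rfl fun i _ => by rw [smul_eq_mul, div_eq_inv_mul]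
    rw [heq]; exact hsum
  -- key per-horizon bound
  have hkey : ∀ s : ℕ, 1 ≤ s →
      P {ω | μhat s ω < μ - ε ∧ c / s ≤ kl (μhat s ω) (μ - ε)}
        ≤ ENNReal.ofReal (exp (-c) * exp (-(s : ℝ) * (ε ^ 2 / (2 * V)))) := by
    intro s hs
    set A : Set Ω := {ω | μhat s ω < μ - ε ∧ c / s ≤ kl (μhat s ω) (μ - ε)} with hA
    set G : Set Ω := {ω | ∀ i ∈ Finset.range s, X i ω ∈ closure Iset} with hG
    set B : Set Ω := A ∩ G with hB
    have hsPos : (0 : ℝ) < s := by exact_mod_cast hs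
    set K : ℝ := kl (μ - ε) μ with hKdef
    set d : ℝ := c / s + K with hd
    have hPA : ∀ E : Set Ω, B ⊆ E → P A ≤ P E := by
      intro E hBE
      have hsub : A ⊆ (⋃ i ∈ Finset.range s, {ω | X i ω ∉ closure Iset}) ∪ E := by
        intro ω hω
        by_cases hgood : ∀ i ∈ Finset.range s, X i ω ∈ closure Iset
        · exact Or.inr (hBE ⟨hω, hgood⟩)
        · push_neg at hgood
          obtain ⟨i, hi, hni⟩ := hgood
          exact Or.inl (mem_biUnion hi hni)
      calc P A ≤ P ((⋃ i ∈ Finset.range s, {ω | X i ω ∉ closure Iset}) ∪ E) :=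
            measure_mono hsub
        _ ≤ P (⋃ i ∈ Finset.range s, {ω | X i ω ∉ closure Iset}) + P E :=
            measure_union_le _ _
        _ = P E := by
            have h0 : P (⋃ i ∈ Finset.range s, {ω | X i ω ∉ closure Iset}) = 0 := by
              refine le_antisymm ?_ zero_le
              calc P (⋃ i ∈ Finset.range s, {ω | X i ω ∉ closure Iset})
                  ≤ ∑ i ∈ Finset.range s, P {ω | X i ω ∉ closure Iset} :=
                    measure_biUnion_finset_le _ _
                _ = 0 := by
                    rw [Finset.sum_eq_zero fun i _ => hbad i]
            rw [h0, zero_add]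
    have hBprop : ∀ ω ∈ B,
        μhat s ω ∈ closure Iset ∧ μhat s ω < μ - ε ∧ d ≤ kl (μhat s ω) μ := by
      intro ω hω
      obtain ⟨⟨h1, h2⟩, hgood⟩ := hω
      have hm : μhat s ω ∈ closure Iset := hmeanC s hs ω hgood
      refine ⟨hm, h1, ?_⟩
      have h3 := hdiffC _ hm
      have h4 : K = b θ - b θ' - (μ - ε) * (θ - θ') := by rw [hK, hθ'eq]
      have h5 : 0 ≤ (μ - ε - μhat s ω) * (θ - θ') :=
        mul_nonneg (by linarith) (by linarith)
      rw [hd]; nlinarith [h2, h3, h4, h5]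
    have hδbound : ∀ δ : ℝ, 0 < δ →
        P A ≤ ENNReal.ofReal (exp (-(s : ℝ) * d) * exp ((s : ℝ) * δ)) := by
      intro δ hδ
      rcases eq_empty_or_nonempty B with hBe | ⟨ω₀, hω₀⟩
      · have h0 := hPA ∅ (by rw [hBe])
        simp only [measure_empty] at h0
        exact h0.trans zero_le
      · obtain ⟨hm0, hlt0, hkl0⟩ := hBprop ω₀ hω₀
        obtain ⟨x, hxI, hxle, hxlb, hsubB⟩ :
            ∃ x, x ∈ Iset ∧ x ≤ μ - ε ∧ d - δ ≤ kl x μ ∧ (∀ ω ∈ B, μhat s ω ≤ x) := by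
          by_cases hKd : d - δ ≤ K
          · exact ⟨μ - ε, hμε, le_refl _, by rw [hKdef] at hKd; exact hKd,
              fun ω hω => (hω.1.1).le⟩
          · push_neg at hKd
            have hmle : μhat s ω₀ ≤ μ - ε := hlt0.le
            have hIccC : Icc (μhat s ω₀) (μ - ε) ⊆ closure Iset :=
              hCconv.ordConnected.out hm0 (subset_closure hμε)
            have hcontIcc : ContinuousOn (fun y => kl y μ) (Icc (μhat s ω₀) (μ - ε)) :=
              (hklcont μ hμI).mono hIccC
            have hdmem : d - δ ∈ Icc (kl (μ - ε) μ) (kl (μhat s ω₀) μ) :=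
              ⟨hKd.le, by linarith⟩
            obtain ⟨x, hxIcc, hxeq⟩ := intermediate_value_Icc' hmle hcontIcc hdmem
            have hxlt : μhat s ω₀ < x := by
              rcases eq_or_lt_of_le hxIcc.1 with heq | h
              · exfalso; rw [← heq] at hxeq; linarith
              · exact h
            have hxI : x ∈ Iset := hspan _ hm0 x hxlt hxIcc.2
            refine ⟨x, hxI, hxIcc.2, le_of_eq hxeq.symm, ?_⟩
            intro ω hω
            obtain ⟨hmC, hmlt, hmkl⟩ := hBprop ω hω
            by_contra hgt
            push_neg at hgt
            have hyI : μhat s ω ∈ Iset := hspan x (subset_closure hxI) _ hgt hmlt.le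
            have := hanti x hxI _ hyI hgt.le (by linarith)
            linarith
        calc P A ≤ P {ω | μhat s ω ≤ x} := hPA _ (fun ω hω => hsubB ω hω)
          _ ≤ ENNReal.ofReal (exp (-(s : ℝ) * kl x μ)) := hchern s hs x hxI hxle
          _ ≤ ENNReal.ofReal (exp (-(s : ℝ) * d) * exp ((s : ℝ) * δ)) := by
              apply ENNReal.ofReal_le_ofReal
              rw [← Real.exp_add]
              apply Real.exp_le_exp.mpr
              nlinarith [hxlb, hsPos]
    have hlim : P A ≤ ENNReal.ofReal (exp (-(s : ℝ) * d)) := by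
      have hcont : Continuous
          (fun δ : ℝ => ENNReal.ofReal (exp (-(s : ℝ) * d) * exp ((s : ℝ) * δ))) := by
        apply ENNReal.continuous_ofReal.comp
        exact continuous_const.mul (Real.continuous_exp.comp (continuous_const.mul continuous_id))
      have htend : Filter.Tendsto
          (fun δ : ℝ => ENNReal.ofReal (exp (-(s : ℝ) * d) * exp ((s : ℝ) * δ)))
          (nhdsWithin 0 (Ioi 0)) (nhds (ENNReal.ofReal (exp (-(s : ℝ) * d)))) := by
        have h0 := hcont.tendsto 0
        simp only [mul_zero, Real.exp_zero, mul_one] at h0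
        exact h0.mono_left nhdsWithin_le_nhds
      exact ge_of_tendsto htend (eventually_nhdsWithin_of_forall fun δ hδ => hδbound δ hδ)
    apply hlim.trans
    apply ENNReal.ofReal_le_ofReal
    rw [← Real.exp_add]
    apply Real.exp_le_exp.mpr
    have h1 : (s : ℝ) * d = c + (s : ℝ) * K := by rw [hd]; field_simp
    have h2 : (s : ℝ) * (ε ^ 2 / (2 * V)) ≤ (s : ℝ) * K :=
      mul_le_mul_of_nonneg_left hKlb hsPos.le
    have h3 : -(s : ℝ) * d = -((s : ℝ) * d) := by ring
    rw [h3, h1]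
    linarith [h2]
  -- assemble: union bound and geometric series
  have hUnion : {ω | ∃ s : ℕ, 1 ≤ s ∧ μhat s ω < μ - ε ∧ c / s ≤ kl (μhat s ω) (μ - ε)}
      = ⋃ n : ℕ, {ω | μhat (n + 1) ω < μ - ε ∧ c / (n + 1 : ℕ) ≤ kl (μhat (n + 1) ω) (μ - ε)} := by
    ext ω
    simp only [mem_setOf_eq, mem_iUnion]
    constructor
    · rintro ⟨s, hs1, hs2, hs3⟩
      cases s with
      | zero => omega
      | succ n => exact ⟨n, hs2, hs3⟩
    · rintro ⟨n, h1, h2⟩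
      exact ⟨n + 1, Nat.succ_le_succ (Nat.zero_le n), h1, h2⟩
  rw [hUnion]
  set a : ℝ := ε ^ 2 / (2 * V) with ha
  have hapos : 0 < a := by rw [ha]; positivity
  have hra : exp (-a) < 1 := by rw [Real.exp_lt_one_iff]; linarith
  set r : ℝ≥0∞ := ENNReal.ofReal (exp (-a)) with hr
  calc P (⋃ n : ℕ, {ω | μhat (n + 1) ω < μ - ε ∧ c / (n + 1 : ℕ) ≤ kl (μhat (n + 1) ω) (μ - ε)})
      ≤ ∑' n : ℕ, P {ω | μhat (n + 1) ω < μ - ε ∧ c / (n + 1 : ℕ) ≤ kl (μhat (n + 1) ω) (μ - ε)} :=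
        measure_iUnion_le _
    _ ≤ ∑' n : ℕ, ENNReal.ofReal (exp (-c)) * r ^ (n + 1) := by
        apply ENNReal.tsum_le_tsum
        intro n
        refine (hkey (n + 1) (Nat.succ_le_succ (Nat.zero_le n))).trans (le_of_eq ?_)
        rw [hr, ← ENNReal.ofReal_pow (exp_pos _).le, ← Real.exp_nat_mul,
          ← ENNReal.ofReal_mul (exp_pos _).le]
        congr 2
        push_cast
        ring
    _ = ENNReal.ofReal (exp (-c)) * (r * (1 - r)⁻¹) := by
        rw [ENNReal.tsum_mul_left, ENNReal.tsum_geometric_add_one]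
    _ ≤ ENNReal.ofReal (2 * V / ε ^ 2 * exp (-c)) := by
        have h2 : 0 < 1 - exp (-a) := by linarith
        have h1 : (1 : ℝ≥0∞) - r = ENNReal.ofReal (1 - exp (-a)) := by
          rw [ENNReal.ofReal_sub 1 (exp_pos (-a)).le, ENNReal.ofReal_one]
        rw [h1, ← ENNReal.ofReal_inv_of_pos h2, hr,
          ← ENNReal.ofReal_mul (exp_pos (-a)).le, ← ENNReal.ofReal_mul (exp_pos (-c)).le]
        apply ENNReal.ofReal_le_ofReal
        have hkey2 : exp (-a) * (1 - exp (-a))⁻¹ ≤ 1 / a := by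
          rw [← div_eq_mul_inv, div_le_div_iff₀ h2 hapos]
          have h3 : exp (-a) * exp a = 1 := by rw [← Real.exp_add]; simp
          have h4 := Real.add_one_le_exp a
          nlinarith [mul_le_mul_of_nonneg_left h4 (Real.exp_pos (-a)).le]
        have h5 : 1 / a = 2 * V / ε ^ 2 := by
          rw [ha]; field_simp
        calc exp (-c) * (exp (-a) * (1 - exp (-a))⁻¹)
            ≤ exp (-c) * (1 / a) := mul_le_mul_of_nonneg_left hkey2 (exp_pos _).le
          _ = 2 * V / ε ^ 2 * exp (-c) := by rw [h5]; ring
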